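/- Let a_1, …, a_k be positive real numbers, where k is a positive integer, and let y ≥ 0. Then the number of k-tuples (ν_1, …, ν_k) of positive integers with ∑_{j=1}^k a_j·ν_j ≤ y is at most (y + ∑_{j=1}^k a_j)^k / (k!·∏_{j=1}^k a_j). -/

import Mathlib

open scoped BigOperators
open Finset

noncomputable section

open Classical in
/-- The finite set of lattice points. -/
def latF (n : ℕ) (b : Fin n → ℝ) (z : ℝ) : Finset (Fin n → ℕ) :=
  (Fintype.piFinset fun j => Finset.Icc 1 ⌊z / b j⌋₊).filter
    fun ν => ∑ j, b j * (ν j : ℝ) ≤ z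

lemma mem_latF {n : ℕ} {b : Fin n → ℝ} {z : ℝ} {ν : Fin n → ℕ} :
    ν ∈ latF n b z ↔ (∀ j, ν j ∈ Finset.Icc 1 ⌊z / b j⌋₊) ∧ ∑ j, b j * (ν j : ℝ) ≤ z := by
  simp [latF, Fintype.mem_piFinset]

lemma binom_aux (n : ℕ) (u c : ℝ) (hu : 0 ≤ u) (hc : 0 ≤ c) :
    u ^ (n + 1) + (n + 1 : ℝ) * c * u ^ n ≤ (u + c) ^ (n + 1) := by
  induction n with
  | zero => norm_num
  | succ n ih =>
    have h2 : (u + c) * (u ^ (n + 1) + ((n : ℝ) + 1) * c * u ^ n)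
        ≤ (u + c) * (u + c) ^ (n + 1) :=
      mul_le_mul_of_nonneg_left ih (by linarith)
    have hnn : (0:ℝ) ≤ ((n : ℝ) + 1) * (c ^ 2) * u ^ n := by positivity
    push_cast
    calc u ^ (n + 1 + 1) + ((n : ℝ) + 1 + 1) * c * u ^ (n + 1)
        ≤ u ^ (n + 1 + 1) + ((n : ℝ) + 1 + 1) * c * u ^ (n + 1)
            + ((n : ℝ) + 1) * (c ^ 2) * u ^ n := by linarith
      _ = (u + c) * (u ^ (n + 1) + ((n : ℝ) + 1) * c * u ^ n) := by ring
      _ ≤ (u + c) * (u + c) ^ (n + 1) := h2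
      _ = (u + c) ^ (n + 1 + 1) := by ring

lemma key_bound : ∀ (n : ℕ) (b : Fin n → ℝ), (∀ j, 0 < b j) → ∀ z : ℝ, 0 ≤ z →
    ((latF n b z).card : ℝ) ≤ (z + ∑ j, b j) ^ n / (Nat.factorial n * ∏ j, b j) := by
  intro n
  induction n with
  | zero =>
    intro b hb z hz
    have : latF 0 b z = {(fun j => Fin.elim0 j : Fin 0 → ℕ)} := by
      ext ν
      simp only [mem_latF, Finset.mem_singleton]
      constructor
      · intro _; funext j; exact Fin.elim0 j
      · intro h; subst h
        exact ⟨fun j => Fin.elim0 j, by simpa using hz⟩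
    simp [this]
  | succ n ih =>
    intro b hb z hz
    set c := b (Fin.last n) with hc
    set b' : Fin n → ℝ := fun j => b j.castSucc with hb'
    have hc0 : 0 < c := hb _
    have hb'0 : ∀ j, 0 < b' j := fun j => hb _
    set M := ⌊z / c⌋₊ with hM
    set s := ∑ j, b' j with hs
    set P := ∏ j, b' j with hP
    have hs0 : 0 ≤ s := Finset.sum_nonneg fun j _ => (hb'0 j).le
    have hP0 : 0 < P := Finset.prod_pos fun j _ => hb'0 j
    have hsum_split : ∀ ν : Fin (n + 1) → ℕ,
        ∑ j, b j * (ν j : ℝ) = (∑ j, b' j * (ν j.castSucc : ℝ)) + c * (ν (Fin.last n) : ℝ) := by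
      intro ν
      rw [Fin.sum_univ_castSucc]
    have hbsum : ∑ j, b j = s + c := by rw [hs]; exact Fin.sum_univ_castSucc fun j => b j
    have hbprod : ∏ j, b j = P * c := by rw [hP]; exact Fin.prod_univ_castSucc fun j => b j
    -- m ≤ M gives c * m ≤ z
    have hcm : ∀ m : ℕ, m ≤ M → c * (m : ℝ) ≤ z := by
      intro m hm
      rw [hM] at hm
      have h1 : (m : ℝ) ≤ z / c := (Nat.le_floor_iff (by positivity)).mp hm
      calc c * (m : ℝ) ≤ c * (z / c) := mul_le_mul_of_nonneg_left h1 hc0.le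
        _ = z := by field_simp
    -- fibering
    have hmem : ∀ ν ∈ latF (n + 1) b z, ν (Fin.last n) ∈ Finset.range (M + 1) := by
      intro ν hν
      rw [mem_latF] at hν
      have h1 : c * (ν (Fin.last n) : ℝ) ≤ z := by
        calc c * (ν (Fin.last n) : ℝ)
            ≤ ∑ j, b j * (ν j : ℝ) :=
              Finset.single_le_sum (f := fun j => b j * (ν j : ℝ))
                (fun j _ => mul_nonneg (hb j).le (Nat.cast_nonneg _)) (Finset.mem_univ _)
          _ ≤ z := hν.2
      have h2 : (ν (Fin.last n) : ℝ) ≤ z / c := by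
        rw [le_div_iff₀ hc0]; linarith
      have h3 : ν (Fin.last n) ≤ M := Nat.le_floor h2
      simpa [Finset.mem_range] using Nat.lt_succ_of_le h3
    have hcard : (latF (n + 1) b z).card
        = ∑ m ∈ Finset.range (M + 1), ((latF (n + 1) b z).filter
            fun ν => ν (Fin.last n) = m).card :=
      Finset.card_eq_sum_card_fiberwise hmem
    -- fiber 0 empty
    have hfib0 : ((latF (n + 1) b z).filter fun ν => ν (Fin.last n) = 0) = ∅ := by
      rw [Finset.filter_eq_empty_iff]
      intro ν hν h0
      rw [mem_latF] at hν
      have h1 := (Finset.mem_Icc.mp (hν.1 (Fin.last n))).1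
      rw [h0] at h1
      exact Nat.not_succ_le_zero 0 h1
    -- fiber bound
    have hfib : ∀ m : ℕ,
        (((latF (n + 1) b z).filter fun ν => ν (Fin.last n) = m).card : ℝ)
          ≤ ((latF n b' (z - c * (m : ℝ))).card : ℝ) := by
      intro m
      have hle : ((latF (n + 1) b z).filter fun ν => ν (Fin.last n) = m).card
          ≤ (latF n b' (z - c * (m : ℝ))).card := by
        apply Finset.card_le_card_of_injOn Fin.init
        · intro ν hν
          rw [Finset.mem_coe, Finset.mem_filter] at hν
          obtain ⟨hν, hlast⟩ := hν
          rw [mem_latF] at hν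
          obtain ⟨hν1, hν2⟩ := hν
          rw [hsum_split ν, hlast] at hν2
          have hsum' : (∑ j, b' j * (ν j.castSucc : ℝ)) ≤ z - c * (m : ℝ) := by linarith
          rw [Finset.mem_coe, mem_latF]
          constructor
          · intro j
            rw [Finset.mem_Icc]
            refine ⟨(Finset.mem_Icc.mp (hν1 j.castSucc)).1, ?_⟩
            apply Nat.le_floor
            rw [le_div_iff₀ (hb'0 j)]
            have hsingle : b' j * (ν j.castSucc : ℝ) ≤ ∑ i, b' i * (ν i.castSucc : ℝ) :=
              Finset.single_le_sum (f := fun i => b' i * (ν i.castSucc : ℝ))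
                (fun i _ => mul_nonneg (hb'0 i).le (Nat.cast_nonneg _)) (Finset.mem_univ _)
            show ((Fin.init ν j : ℕ) : ℝ) * b' j ≤ z - c * (m : ℝ)
            have : Fin.init ν j = ν j.castSucc := rfl
            rw [this]
            linarith
          · show ∑ j, b' j * ((Fin.init ν j : ℕ) : ℝ) ≤ z - c * (m : ℝ)
            have : ∀ j, Fin.init ν j = ν j.castSucc := fun j => rfl
            calc ∑ j, b' j * ((Fin.init ν j : ℕ) : ℝ)
                = ∑ j, b' j * (ν j.castSucc : ℝ) := by
                  apply Finset.sum_congr rfl; intro j _; rw [this j]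
              _ ≤ z - c * (m : ℝ) := hsum'
        · intro ν₁ h₁ ν₂ h₂ hinit
          simp only [Finset.coe_filter, Set.mem_setOf_eq] at h₁ h₂
          rw [← Fin.snoc_init_self ν₁, ← Fin.snoc_init_self ν₂, hinit, h₁.2, h₂.2]
      exact_mod_cast hle
    -- IH applied to each fiber
    have hIH : ∀ m : ℕ, m ≤ M →
        ((latF n b' (z - c * (m : ℝ))).card : ℝ)
          ≤ (z - c * (m : ℝ) + s) ^ n / (Nat.factorial n * P) := by
      intro m hmM
      exact ih b' hb'0 _ (by linarith [hcm m hmM])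
    -- telescoping
    set g : ℕ → ℝ := fun i => (z + s - c * (i : ℝ)) ^ (n + 1) with hg
    have htel : ∀ i : ℕ, i + 1 ≤ M →
        ((n : ℝ) + 1) * c * (z - c * ((i + 1 : ℕ) : ℝ) + s) ^ n ≤ g i - g (i + 1) := by
      intro i hi
      have hcz : c * ((i + 1 : ℕ) : ℝ) ≤ z := hcm (i + 1) hi
      set u := z + s - c * ((i + 1 : ℕ) : ℝ) with hu
      have hu0 : 0 ≤ u := by rw [hu]; linarith
      have hgi : g i = (u + c) ^ (n + 1) := by
        simp only [hg, hu]; push_cast; ring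
      have hgi1 : g (i + 1) = u ^ (n + 1) := by
        simp only [hg, hu]
      have hbin := binom_aux n u c hu0 hc0.le
      rw [hgi, hgi1]
      have heq : z - c * ((i + 1 : ℕ) : ℝ) + s = u := by rw [hu]; ring
      rw [heq]
      linarith
    have hsum_pow : ∑ i ∈ Finset.range M, (z - c * ((i + 1 : ℕ) : ℝ) + s) ^ n
        ≤ (z + s) ^ (n + 1) / (((n : ℝ) + 1) * c) := by
      rw [le_div_iff₀ (by positivity)]
      have h1 : (∑ i ∈ Finset.range M, (z - c * ((i + 1 : ℕ) : ℝ) + s) ^ n) * (((n : ℝ) + 1) * c)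
          = ∑ i ∈ Finset.range M, ((n : ℝ) + 1) * c * (z - c * ((i + 1 : ℕ) : ℝ) + s) ^ n := by
        rw [Finset.sum_mul]; apply Finset.sum_congr rfl; intros; ring
      rw [h1]
      calc ∑ i ∈ Finset.range M, ((n : ℝ) + 1) * c * (z - c * ((i + 1 : ℕ) : ℝ) + s) ^ n
          ≤ ∑ i ∈ Finset.range M, (g i - g (i + 1)) := by
            apply Finset.sum_le_sum
            intro i hi
            rw [Finset.mem_range] at hi
            exact htel i hi
        _ = g 0 - g M := Finset.sum_range_sub' g M
        _ ≤ g 0 := by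
            have hgM : 0 ≤ g M := by
              simp only [hg]
              exact pow_nonneg (by linarith [hcm M le_rfl]) _
            linarith
        _ = (z + s) ^ (n + 1) := by simp only [hg]; norm_num
    -- put everything together
    have hcardsum : ((latF (n + 1) b z).card : ℝ)
        ≤ ∑ i ∈ Finset.range M, ((latF n b' (z - c * ((i + 1 : ℕ) : ℝ))).card : ℝ) := by
      have hc2 : ((latF (n + 1) b z).card : ℝ)
          = ∑ m ∈ Finset.range (M + 1), (((latF (n + 1) b z).filter
              fun ν => ν (Fin.last n) = m).card : ℝ) := by
        rw [hcard]; push_cast; rfl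
      rw [hc2, Finset.sum_range_succ' (fun m => (((latF (n + 1) b z).filter
            fun ν => ν (Fin.last n) = m).card : ℝ)) M]
      rw [hfib0]
      simp only [Finset.card_empty, Nat.cast_zero, add_zero]
      exact Finset.sum_le_sum fun i _ => hfib (i + 1)
    have hfac : (Nat.factorial (n + 1) : ℝ) = ((n : ℝ) + 1) * Nat.factorial n := by
      rw [Nat.factorial_succ]; push_cast; ring
    have hfac0 : (0:ℝ) < Nat.factorial n := by positivity
    calc ((latF (n + 1) b z).card : ℝ)
        ≤ ∑ i ∈ Finset.range M, ((latF n b' (z - c * ((i + 1 : ℕ) : ℝ))).card : ℝ) := hcardsum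
      _ ≤ ∑ i ∈ Finset.range M, (z - c * ((i + 1 : ℕ) : ℝ) + s) ^ n / (Nat.factorial n * P) :=
          Finset.sum_le_sum fun i hi => hIH (i + 1) (Finset.mem_range.mp hi)
      _ = (∑ i ∈ Finset.range M, (z - c * ((i + 1 : ℕ) : ℝ) + s) ^ n) / (Nat.factorial n * P) := by
          rw [Finset.sum_div]
      _ ≤ ((z + s) ^ (n + 1) / (((n : ℝ) + 1) * c)) / (Nat.factorial n * P) :=
          (div_le_div_iff_of_pos_right (by positivity)).mpr hsum_pow
      _ = (z + s) ^ (n + 1) / (Nat.factorial (n + 1) * (P * c)) := by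
          rw [hfac, div_div]; congr 1; ring
      _ ≤ (z + (s + c)) ^ (n + 1) / (Nat.factorial (n + 1) * (P * c)) :=
          (div_le_div_iff_of_pos_right (by positivity)).mpr
            (pow_le_pow_left₀ (by linarith) (by linarith) _)
      _ = (z + ∑ j, b j) ^ (n + 1) / (Nat.factorial (n + 1) * ∏ j, b j) := by
          rw [hbsum, hbprod]

theorem count_lattice_points (k : ℕ) (hk : 0 < k) (a : Fin k → ℝ)
    (ha : ∀ j, 0 < a j) (y : ℝ) (hy : 0 ≤ y) :
    (Set.ncard {ν : Fin k → ℕ | (∀ j, 1 ≤ ν j) ∧ ∑ j, a j * (ν j : ℝ) ≤ y} : ℝ)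
      ≤ (y + ∑ j, a j) ^ k / (Nat.factorial k * ∏ j, a j) := by
  have hset : {ν : Fin k → ℕ | (∀ j, 1 ≤ ν j) ∧ ∑ j, a j * (ν j : ℝ) ≤ y}
      = ↑(latF k a y) := by
    ext ν
    simp only [Set.mem_setOf_eq, Finset.mem_coe, mem_latF]
    constructor
    · rintro ⟨h1, h2⟩
      refine ⟨fun j => Finset.mem_Icc.mpr ⟨h1 j, ?_⟩, h2⟩
      apply Nat.le_floor
      rw [le_div_iff₀ (ha j)]
      have hsingle : a j * (ν j : ℝ) ≤ ∑ i, a i * (ν i : ℝ) :=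
        Finset.single_le_sum (f := fun i => a i * (ν i : ℝ))
          (fun i _ => mul_nonneg (ha i).le (Nat.cast_nonneg _)) (Finset.mem_univ _)
      show (ν j : ℝ) * a j ≤ y
      linarith
    · rintro ⟨h1, h2⟩
      exact ⟨fun j => (Finset.mem_Icc.mp (h1 j)).1, h2⟩
  rw [hset, Set.ncard_coe_finset]
  exact key_bound k a ha y hy
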